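/- Let z > 0 and for each positive integer j set w(j) = arcosh(1 + z/(2j)) and β(j) = (w(j) + sinh(w(j)))/2. Then for every m ∈ ℕ one has lim_{j→∞} j^m · √(β(j)/j) · e^{−2jβ(j)} = 0, while for every ε > 0 one has lim_{j→∞} e^{εj} · √(β(j)/j) · e^{−2jβ(j)} = +∞. -/

import Mathlib

open Filter Topology

/-- The inverse hyperbolic cosine, `arcosh x = log (x + √(x² - 1))` (for `x ≥ 1`). -/
noncomputable def arcosh (x : ℝ) : ℝ :=
  Real.log (x + Real.sqrt (x ^ 2 - 1))

/-- `w(j) = arcosh (1 + z/(2j))`. -/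
noncomputable def wFn (z : ℝ) (j : ℕ) : ℝ :=
  arcosh (1 + z / (2 * j))

/-- `β(j) = (w(j) + sinh w(j))/2`. -/
noncomputable def betaJ (z : ℝ) (j : ℕ) : ℝ :=
  (wFn z j + Real.sinh (wFn z j)) / 2

lemma sinh_arcosh_one_add (x : ℝ) (hx : 0 ≤ x) :
    Real.sinh (arcosh (1 + x)) = Real.sqrt (2 * x + x ^ 2) := by
  have h2 : (1 + x) ^ 2 - 1 = 2 * x + x ^ 2 := by ring
  set s := Real.sqrt (2 * x + x ^ 2) with hs
  have hsnn : 0 ≤ s := Real.sqrt_nonneg _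
  have hssq : s ^ 2 = 2 * x + x ^ 2 := Real.sq_sqrt (by nlinarith)
  have ht : (0:ℝ) < 1 + x + s := by nlinarith
  have hinv : (1 + x + s)⁻¹ = 1 + x - s := by
    have : (1 + x - s) * (1 + x + s) = 1 := by nlinarith
    exact inv_eq_of_mul_eq_one_left this
  rw [arcosh, h2, Real.sinh_eq, Real.exp_log ht, Real.exp_neg, Real.exp_log ht, hinv]
  ring

lemma arcosh_one_add_pos (x : ℝ) (hx : 0 < x) : 0 < arcosh (1 + x) := by
  rw [arcosh]
  apply Real.log_pos
  have := Real.sqrt_nonneg ((1 + x) ^ 2 - 1)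
  linarith

/-- Key bounds on `betaJ` for `j ≥ 1`. -/
lemma betaJ_bounds (z : ℝ) (hz : 0 < z) (j : ℕ) (hj : 1 ≤ j) :
    Real.sqrt z / (2 * j) ≤ betaJ z j ∧
    Real.sqrt z * Real.sqrt j / 2 ≤ (j : ℝ) * betaJ z j ∧
    betaJ z j ≤ Real.sqrt (z + z ^ 2 / 4) ∧
    (j : ℝ) * betaJ z j ≤ Real.sqrt (z + z ^ 2 / 4) * Real.sqrt j := by
  have hj0 : (0:ℝ) < j := by exact_mod_cast Nat.pos_of_ne_zero (by omega)
  have hj1 : (1:ℝ) ≤ j := by exact_mod_cast hj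
  set x : ℝ := z / (2 * j) with hxdef
  have hx : 0 < x := by positivity
  have hw : wFn z j = arcosh (1 + x) := rfl
  have hsinh : Real.sinh (wFn z j) = Real.sqrt (2 * x + x ^ 2) := by
    rw [hw, sinh_arcosh_one_add x hx.le]
  have hwpos : 0 < wFn z j := by rw [hw]; exact arcosh_one_add_pos x hx
  have hwle : wFn z j ≤ Real.sinh (wFn z j) :=
    (Real.self_lt_sinh_iff.mpr hwpos).le
  have hβlow : Real.sqrt (2 * x + x ^ 2) / 2 ≤ betaJ z j := by
    rw [betaJ, ← hsinh]; linarith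
  have hβup : betaJ z j ≤ Real.sqrt (2 * x + x ^ 2) := by
    rw [betaJ, ← hsinh]; linarith
  -- numeric bounds on sqrt(2x+x^2)
  have h2x : 2 * x = z / j := by rw [hxdef]; field_simp
  have hlow1 : Real.sqrt (z / j) ≤ Real.sqrt (2 * x + x ^ 2) :=
    Real.sqrt_le_sqrt (by nlinarith)
  have hdiv : Real.sqrt (z / j) = Real.sqrt z / Real.sqrt j := Real.sqrt_div hz.le _
  have hsqj : Real.sqrt (j : ℝ) * Real.sqrt (j : ℝ) = (j : ℝ) := Real.mul_self_sqrt hj0.le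
  have hsj0 : (0:ℝ) < Real.sqrt j := Real.sqrt_pos.mpr hj0
  have hsjle : Real.sqrt (j : ℝ) ≤ (j : ℝ) := by nlinarith
  have hsj1 : (1:ℝ) ≤ Real.sqrt j := by
    rw [show (1:ℝ) = Real.sqrt 1 by simp]; exact Real.sqrt_le_sqrt hj1
  have hup1 : Real.sqrt (2 * x + x ^ 2) ≤ Real.sqrt ((z + z ^ 2 / 4) / j) := by
    apply Real.sqrt_le_sqrt
    have hx2 : x ^ 2 = z ^ 2 / (4 * j ^ 2) := by rw [hxdef]; field_simp; ring
    rw [h2x] at *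
    rw [hx2]
    rw [div_add_div _ _ (by positivity) (by positivity), div_le_div_iff₀ (by positivity) hj0]
    nlinarith [mul_le_mul_of_nonneg_left hj1 (mul_nonneg (mul_nonneg (sq_nonneg z) hj0.le) hj0.le)]
  have hupD : Real.sqrt ((z + z ^ 2 / 4) / j) = Real.sqrt (z + z ^ 2 / 4) / Real.sqrt j :=
    Real.sqrt_div (by positivity) _
  have hDnn : 0 ≤ Real.sqrt (z + z ^ 2 / 4) := Real.sqrt_nonneg _
  refine ⟨?_, ?_, ?_, ?_⟩
  · calc Real.sqrt z / (2 * j) ≤ Real.sqrt z / (2 * Real.sqrt j) := by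
          apply div_le_div_of_nonneg_left (Real.sqrt_nonneg z) (by positivity) (by linarith)
        _ = Real.sqrt (z / j) / 2 := by rw [hdiv]; ring
        _ ≤ _ := by linarith [hlow1, hβlow]
  · have : Real.sqrt (z / j) / 2 ≤ betaJ z j := by linarith
    calc Real.sqrt z * Real.sqrt j / 2 = (j : ℝ) * (Real.sqrt z / Real.sqrt j / 2) := by
          field_simp
          linear_combination hsqj
      _ = (j : ℝ) * (Real.sqrt (z / j) / 2) := by rw [hdiv]
      _ ≤ (j : ℝ) * betaJ z j := by
          apply mul_le_mul_of_nonneg_left this hj0.le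
  · calc betaJ z j ≤ Real.sqrt (z + z ^ 2 / 4) / Real.sqrt j := by
          rw [← hupD]; linarith
      _ ≤ Real.sqrt (z + z ^ 2 / 4) := by
          rw [div_le_iff₀ hsj0]; nlinarith
  · have h1 : betaJ z j ≤ Real.sqrt (z + z ^ 2 / 4) / Real.sqrt j := by
      rw [← hupD]; linarith
    calc (j : ℝ) * betaJ z j ≤ (j : ℝ) * (Real.sqrt (z + z ^ 2 / 4) / Real.sqrt j) :=
          mul_le_mul_of_nonneg_left h1 hj0.le
      _ = Real.sqrt (z + z ^ 2 / 4) * Real.sqrt j := by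
          field_simp
          linear_combination -hsqj

lemma quad_le_exp (x : ℝ) (hx : 0 ≤ x) : x ^ 2 / 4 ≤ Real.exp x := by
  have h := Real.add_one_le_exp (x / 2)
  have h2 : Real.exp (x / 2) * Real.exp (x / 2) = Real.exp x := by
    rw [← Real.exp_add]; ring_nf
  nlinarith [Real.exp_pos (x / 2)]

lemma tendsto_sqrt_nat : Tendsto (fun j : ℕ => Real.sqrt j) atTop atTop := by
  apply tendsto_atTop_atTop.mpr
  intro b
  refine ⟨⌈(max b 0) ^ 2⌉₊, fun a ha => ?_⟩
  have h1 : ((max b 0) ^ 2 : ℝ) ≤ a := le_trans (Nat.le_ceil _) (by exact_mod_cast ha)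
  calc b ≤ max b 0 := le_max_left _ _
    _ = Real.sqrt ((max b 0) ^ 2) := (Real.sqrt_sq (le_max_right _ _)).symm
    _ ≤ Real.sqrt a := Real.sqrt_le_sqrt h1


/-- For `z > 0`: `j^m √(β(j)/j) e^(-2jβ(j)) → 0` for every `m ∈ ℕ`, while
`e^(εj) √(β(j)/j) e^(-2jβ(j)) → +∞` for every `ε > 0`. -/
theorem betaJ_intermediate_decay (z : ℝ) (hz : 0 < z) :
    (∀ m : ℕ,
      Tendsto
        (fun j : ℕ => (j : ℝ) ^ m * Real.sqrt (betaJ z j / j) * Real.exp (-2 * j * betaJ z j))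
        atTop (𝓝 0)) ∧
    (∀ ε : ℝ, 0 < ε →
      Tendsto
        (fun j : ℕ =>
          Real.exp (ε * j) * Real.sqrt (betaJ z j / j) * Real.exp (-2 * j * betaJ z j))
        atTop atTop) := by
  set D : ℝ := Real.sqrt (z + z ^ 2 / 4) with hD
  have hDnn : 0 ≤ D := Real.sqrt_nonneg _
  set sz : ℝ := Real.sqrt z with hsz
  have hsz0 : 0 < sz := Real.sqrt_pos.mpr hz
  constructor
  · -- part 1
    intro m
    have hg : Tendsto (fun t : ℝ => t ^ (2 * m) * Real.exp (-sz * t)) atTop (𝓝 0) := by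
      have h := tendsto_rpow_mul_exp_neg_mul_atTop_nhds_zero (2 * m : ℕ) sz hsz0
      refine h.congr' ?_
      filter_upwards [eventually_ge_atTop (0:ℝ)] with t ht
      rw [Real.rpow_natCast]
    have hcomp : Tendsto
        (fun j : ℕ => Real.sqrt D * ((Real.sqrt j) ^ (2 * m) * Real.exp (-sz * Real.sqrt j)))
        atTop (𝓝 0) := by
      have := (hg.comp tendsto_sqrt_nat).const_mul (Real.sqrt D)
      simpa using this
    apply squeeze_zero' ?_ ?_ hcomp
    · filter_upwards with j
      positivity
    · filter_upwards [eventually_ge_atTop 1] with j hj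
      obtain ⟨hb1, hb2, hb3, hb4⟩ := betaJ_bounds z hz j hj
      have hj0 : (0:ℝ) < j := by exact_mod_cast Nat.pos_of_ne_zero (by omega)
      have hj1 : (1:ℝ) ≤ j := by exact_mod_cast hj
      have hβ0 : 0 ≤ betaJ z j := le_trans (by positivity) hb1
      have hpow : ((j : ℝ)) ^ m = (Real.sqrt j) ^ (2 * m) := by
        rw [pow_mul, Real.sq_sqrt hj0.le]
      have hBle : Real.sqrt (betaJ z j / j) ≤ Real.sqrt D := by
        apply Real.sqrt_le_sqrt
        calc betaJ z j / j ≤ betaJ z j / 1 := by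
              apply div_le_div_of_nonneg_left hβ0 one_pos hj1
          _ = betaJ z j := by ring
          _ ≤ D := hb3
      have hEle : Real.exp (-2 * j * betaJ z j) ≤ Real.exp (-sz * Real.sqrt j) := by
        apply Real.exp_le_exp.mpr
        nlinarith
      calc (j : ℝ) ^ m * Real.sqrt (betaJ z j / j) * Real.exp (-2 * j * betaJ z j)
          ≤ (j : ℝ) ^ m * Real.sqrt D * Real.exp (-sz * Real.sqrt j) := by
            apply mul_le_mul
            · exact mul_le_mul_of_nonneg_left hBle (by positivity)
            · exact hEle
            · positivity
            · positivity
        _ = Real.sqrt D * ((Real.sqrt j) ^ (2 * m) * Real.exp (-sz * Real.sqrt j)) := by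
            rw [hpow]; ring
  · -- part 2
    intro ε hε
    set c : ℝ := Real.sqrt (sz / 2) with hc
    have hc0 : 0 < c := Real.sqrt_pos.mpr (by positivity)
    set K : ℝ := 4 * D ^ 2 / ε with hK
    set C : ℝ := c * Real.exp (-K) * (9 * ε ^ 2 / 64) with hC
    have hC0 : 0 < C := by positivity
    have hmain : ∀ j : ℕ, 1 ≤ j → C * j ≤
        Real.exp (ε * j) * Real.sqrt (betaJ z j / j) * Real.exp (-2 * j * betaJ z j) := by
      intro j hj
      obtain ⟨hb1, hb2, hb3, hb4⟩ := betaJ_bounds z hz j hj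
      have hj0 : (0:ℝ) < j := by exact_mod_cast Nat.pos_of_ne_zero (by omega)
      have hj1 : (1:ℝ) ≤ j := by exact_mod_cast hj
      have hβ0 : 0 ≤ betaJ z j := le_trans (by positivity) hb1
      have hsj0 : 0 < Real.sqrt j := Real.sqrt_pos.mpr hj0
      have hsqj : Real.sqrt (j:ℝ) ^ 2 = (j:ℝ) := Real.sq_sqrt hj0.le
      -- lower bound for sqrt(β/j)
      have hBge : c / j ≤ Real.sqrt (betaJ z j / j) := by
        have h1 : (sz / 2) / (j:ℝ) ^ 2 ≤ betaJ z j / j := by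
          rw [div_le_div_iff₀ (by positivity) hj0]
          have hb1' : sz ≤ betaJ z j * (2 * j) := by
            rw [div_le_iff₀ (by positivity)] at hb1; linarith
          nlinarith [mul_le_mul_of_nonneg_right hb1' hj0.le]
        calc c / j = Real.sqrt ((sz / 2) / (j:ℝ) ^ 2) := by
              rw [Real.sqrt_div (by positivity), Real.sqrt_sq hj0.le]
          _ ≤ _ := Real.sqrt_le_sqrt h1
      -- lower bound for exp(-2jβ)
      have hEge : Real.exp (-(2 * D * Real.sqrt j)) ≤ Real.exp (-2 * j * betaJ z j) := by
        apply Real.exp_le_exp.mpr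
        nlinarith
      -- linear-vs-sqrt estimate
      have hlin : (3 * ε / 4) * j - K ≤ ε * j - 2 * D * Real.sqrt j := by
        have h4 : (0:ℝ) < ε / 4 := by linarith
        have hq2 : Real.sqrt (4 * D ^ 2 / ε) ^ 2 = 4 * D ^ 2 / ε :=
          Real.sq_sqrt (by positivity)
        have hp2 : Real.sqrt (ε / 4) ^ 2 = ε / 4 := Real.sq_sqrt h4.le
        have hpq : Real.sqrt (ε / 4) * Real.sqrt (4 * D ^ 2 / ε) = D := by
          rw [← Real.sqrt_mul h4.le]
          rw [show ε / 4 * (4 * D ^ 2 / ε) = D ^ 2 by field_simp]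
          exact Real.sqrt_sq hDnn
        have expand : (Real.sqrt (ε / 4) * Real.sqrt j - Real.sqrt (4 * D ^ 2 / ε)) ^ 2
            = ε / 4 * (j:ℝ) - 2 * D * Real.sqrt j + 4 * D ^ 2 / ε := by
          have h' : (Real.sqrt (ε / 4) * Real.sqrt j - Real.sqrt (4 * D ^ 2 / ε)) ^ 2
              = Real.sqrt (ε / 4) ^ 2 * Real.sqrt (j:ℝ) ^ 2
                - 2 * (Real.sqrt (ε / 4) * Real.sqrt (4 * D ^ 2 / ε)) * Real.sqrt j
                + Real.sqrt (4 * D ^ 2 / ε) ^ 2 := by ring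
          rw [h', hp2, hq2, hpq, hsqj]
        have hnn := sq_nonneg (Real.sqrt (ε / 4) * Real.sqrt j - Real.sqrt (4 * D ^ 2 / ε))
        rw [expand] at hnn
        rw [hK]
        linarith
      have hjne : (j:ℝ) ≠ 0 := hj0.ne'
      calc C * j = (c / j) * Real.exp (-K) * ((3 * ε / 4 * j) ^ 2 / 4) := by
            rw [hC]; field_simp; ring
        _ ≤ (c / j) * Real.exp (-K) * Real.exp ((3 * ε / 4) * j) := by
            apply mul_le_mul_of_nonneg_left (quad_le_exp _ (by positivity)) (by positivity)
        _ = (c / j) * Real.exp ((3 * ε / 4) * j - K) := by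
            rw [mul_assoc, ← Real.exp_add,
              show -K + 3 * ε / 4 * (j:ℝ) = (3 * ε / 4) * j - K by ring]
        _ ≤ (c / j) * Real.exp (ε * j - 2 * D * Real.sqrt j) := by
            apply mul_le_mul_of_nonneg_left (Real.exp_le_exp.mpr hlin) (by positivity)
        _ = Real.exp (ε * j) * (c / j) * Real.exp (-(2 * D * Real.sqrt j)) := by
            rw [show ε * j - 2 * D * Real.sqrt j = ε * j + -(2 * D * Real.sqrt j) by ring,
              Real.exp_add]; ring
        _ ≤ Real.exp (ε * j) * Real.sqrt (betaJ z j / j) * Real.exp (-2 * j * betaJ z j) := by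
            apply mul_le_mul
            · exact mul_le_mul_of_nonneg_left hBge (Real.exp_pos _).le
            · exact hEge
            · positivity
            · positivity
    have hlinT : Tendsto (fun j : ℕ => C * (j : ℝ)) atTop atTop :=
      Tendsto.const_mul_atTop hC0 tendsto_natCast_atTop_atTop
    apply tendsto_atTop_mono' atTop ?_ hlinT
    filter_upwards [eventually_ge_atTop 1] with j hj
    exact hmain j hj
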